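/- There exist finite sets A = {1,2,3}×{1,2,3}, B = {1,2,3}, the projection π : A → B onto the second coordinate, and probability measures μ, ρ on {0,1}^A such that: μ is a π-lift; for every section s of π, the pushdown of μ is stochastically dominated by the s-marginal of ρ; yet μ is NOT stochastically dominated by ρ. Explicitly, μ is uniform on the four matrices {zero matrix, 1 in positions (1,1) and (1,2), 1 in positions (2,1) and (2,3), 1 in positions (3,2) and (3,3)}, and ρ is uniform on the all-ones matrix and the three matrices obtained from it by zeroing out the positions (1,3),(2,2),(3,1); (1,2),(2,1),(3,3); and (1,1),(2,3),(3,2) respectively. -/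
import Mathlib

open MeasureTheory ProbabilityTheory

/-- `μ` is stochastically dominated by `ν`. -/
def StochDom {E : Type*} [MeasurableSpace E] [Preorder E] (μ ν : Measure E) : Prop :=
  ∃ κ : Measure (E × E), IsProbabilityMeasure κ ∧ κ.map Prod.fst = μ ∧
    κ.map Prod.snd = ν ∧ κ {q | q.1 ≤ q.2} = 1

/-- Configurations are `{0,1}`-matrices indexed by (row, column); columns are fibres of
the projection onto the second coordinate. -/
abbrev Config := Fin 3 × Fin 3 → Bool

noncomputable def μcex : Measure Config :=
  (4 : ENNReal)⁻¹ • (Measure.dirac (fun _ => false)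
    + Measure.dirac (fun a => decide (a = (0, 0) ∨ a = (0, 1)))
    + Measure.dirac (fun a => decide (a = (1, 0) ∨ a = (1, 2)))
    + Measure.dirac (fun a => decide (a = (2, 1) ∨ a = (2, 2))))

noncomputable def ρcex : Measure Config :=
  (4 : ENNReal)⁻¹ • (Measure.dirac (fun _ => true)
    + Measure.dirac (fun a => decide (¬(a = (0, 2) ∨ a = (1, 1) ∨ a = (2, 0))))
    + Measure.dirac (fun a => decide (¬(a = (0, 1) ∨ a = (1, 0) ∨ a = (2, 2))))
    + Measure.dirac (fun a => decide (¬(a = (0, 0) ∨ a = (1, 2) ∨ a = (2, 1))))) 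

/- ### Auxiliary definitions and lemmas -/

/-- The four atoms of `μcex`. -/
def μAt : Fin 4 → Config :=
  ![fun _ => false, fun a => decide (a = (0, 0) ∨ a = (0, 1)),
    fun a => decide (a = (1, 0) ∨ a = (1, 2)),
    fun a => decide (a = (2, 1) ∨ a = (2, 2))]

/-- The four atoms of `ρcex`. -/
def ρAt : Fin 4 → Config :=
  ![fun _ => true, fun a => decide (¬(a = (0, 2) ∨ a = (1, 1) ∨ a = (2, 0))),
    fun a => decide (¬(a = (0, 1) ∨ a = (1, 0) ∨ a = (2, 2))),
    fun a => decide (¬(a = (0, 0) ∨ a = (1, 2) ∨ a = (2, 1)))]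

/-- The four atoms of the pushdown of `μcex`. -/
def pAt : Fin 4 → (Fin 3 → Bool) :=
  ![fun _ => false, fun b => decide (b = 0 ∨ b = 1), fun b => decide (b = 0 ∨ b = 2),
    fun b => decide (b = 1 ∨ b = 2)]

lemma mset {α : Type*} [Countable α] [MeasurableSpace α] [MeasurableSingletonClass α]
    (s : Set α) : MeasurableSet s := s.to_countable.measurableSet

lemma μcex_eq : μcex = (4 : ENNReal)⁻¹ •
    (Measure.dirac (μAt 0) + Measure.dirac (μAt 1) + Measure.dirac (μAt 2)
      + Measure.dirac (μAt 3)) := rfl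

lemma ρcex_eq : ρcex = (4 : ENNReal)⁻¹ •
    (Measure.dirac (ρAt 0) + Measure.dirac (ρAt 1) + Measure.dirac (ρAt 2)
      + Measure.dirac (ρAt 3)) := rfl

lemma map4 {α β : Type*} [MeasurableSpace α] [MeasurableSpace β] {f : α → β}
    (hf : Measurable f) (x0 x1 x2 x3 : α) :
    ((4 : ENNReal)⁻¹ • (Measure.dirac x0 + Measure.dirac x1 + Measure.dirac x2
      + Measure.dirac x3)).map f
    = (4 : ENNReal)⁻¹ • (Measure.dirac (f x0) + Measure.dirac (f x1) + Measure.dirac (f x2)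
      + Measure.dirac (f x3)) := by
  simp [Measure.map_smul, Measure.map_add, hf, Measure.map_dirac']

lemma apply4 {α : Type*} [MeasurableSpace α] [MeasurableSingletonClass α]
    (x0 x1 x2 x3 : α) (s : Set α) :
    ((4 : ENNReal)⁻¹ • (Measure.dirac x0 + Measure.dirac x1 + Measure.dirac x2
      + Measure.dirac x3)) s
    = (4 : ENNReal)⁻¹ * (s.indicator 1 x0 + s.indicator 1 x1 + s.indicator 1 x2
      + s.indicator 1 x3) := by
  simp [Measure.add_apply, Measure.dirac_apply, mul_add]

set_option maxRecDepth 100000 in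
set_option maxHeartbeats 4000000 in
lemma key : ∀ r : Fin 3 → Fin 3, ∃ g : Equiv.Perm (Fin 4),
    ∀ i b, pAt i b ≤ ρAt (g i) (r b, b) := by decide

lemma key3 : ∀ i : Fin 4, i ≠ 0 → ∀ j : Fin 4,
    (∀ a, μAt i a ≤ ρAt j a) → j = 0 ∨ j = 1 := by decide

/-- **A counterexample:** `μcex` is a lift for the column projection, its pushdown is
stochastically dominated by the `s`-marginal of `ρcex` for every section `s`, and yet
`μcex` is not stochastically dominated by `ρcex`. -/
theorem stmt10 :
    -- `μcex` is a `π`-lift for `π = Prod.snd` (each column has at most one `1`)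
    μcex {x | ∀ a a' : Fin 3 × Fin 3, a.2 = a'.2 → x a = true → x a' = true → a = a'} = 1 ∧
    -- for every section `s` of the column projection, the pushdown of `μcex` is
    -- stochastically dominated by the `s`-marginal of `ρcex`
    (∀ s : Fin 3 → Fin 3 × Fin 3, (∀ b, (s b).2 = b) →
      StochDom
        (μcex.map fun x (b : Fin 3) => x (0, b) || x (1, b) || x (2, b))
        (ρcex.map fun x (b : Fin 3) => x (s b))) ∧
    -- yet `μcex` is not stochastically dominated by `ρcex`
    ¬ StochDom μcex ρcex := by
  refine ⟨?_, ?_, ?_⟩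
  · rw [μcex_eq, apply4]
    rw [Set.indicator_of_mem (by decide), Set.indicator_of_mem (by decide),
      Set.indicator_of_mem (by decide), Set.indicator_of_mem (by decide)]
    norm_num
    exact ENNReal.inv_mul_cancel (by norm_num) (by norm_num)
  · intro s hs
    set r : Fin 3 → Fin 3 := fun b => (s b).1 with hr
    obtain ⟨g, hg⟩ := key r
    set Q : Fin 4 → (Fin 3 → Bool) := fun i b => ρAt i (r b, b) with hQ
    refine ⟨(4 : ENNReal)⁻¹ • (Measure.dirac (pAt 0, Q (g 0)) + Measure.dirac (pAt 1, Q (g 1))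
      + Measure.dirac (pAt 2, Q (g 2)) + Measure.dirac (pAt 3, Q (g 3))), ?_, ?_, ?_, ?_⟩
    · constructor
      rw [apply4]
      simp only [Set.indicator_univ, Pi.one_apply]
      norm_num
      exact ENNReal.inv_mul_cancel (by norm_num) (by norm_num)
    · rw [map4 measurable_fst, μcex_eq, map4 (measurable_of_countable _)]
      have e : ∀ i : Fin 4, (fun b => μAt i (0, b) || μAt i (1, b) || μAt i (2, b)) = pAt i := by
        decide
      rw [e 0, e 1, e 2, e 3]
    · rw [map4 measurable_snd, ρcex_eq, map4 (measurable_of_countable _)]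
      have hmarg : ∀ i : Fin 4, (fun b => ρAt i (s b)) = Q i := by
        intro i; funext b
        exact (congrArg (ρAt i) (Prod.ext_iff.mpr ⟨rfl, (hs b).symm⟩ :
          ((r b, b) : Fin 3 × Fin 3) = s b)).symm
      have hperm : (∑ i : Fin 4, Measure.dirac (Q (g i))) = ∑ i : Fin 4, Measure.dirac (Q i) :=
        Equiv.sum_comp g (fun i => Measure.dirac (Q i))
      rw [Fin.sum_univ_four, Fin.sum_univ_four] at hperm
      show (4 : ENNReal)⁻¹ • (Measure.dirac (Q (g 0)) + Measure.dirac (Q (g 1))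
        + Measure.dirac (Q (g 2)) + Measure.dirac (Q (g 3))) = _
      rw [hperm, hmarg 0, hmarg 1, hmarg 2, hmarg 3]
    · rw [apply4]
      have hmem : ∀ i : Fin 4,
          (pAt i, Q (g i)) ∈ {q : (Fin 3 → Bool) × (Fin 3 → Bool) | q.1 ≤ q.2} := by
        intro i
        exact Pi.le_def.mpr fun b => hg i b
      rw [Set.indicator_of_mem (hmem 0), Set.indicator_of_mem (hmem 1),
        Set.indicator_of_mem (hmem 2), Set.indicator_of_mem (hmem 3)]
      simp only [Pi.one_apply]
      norm_num
      exact ENNReal.inv_mul_cancel (by norm_num) (by norm_num)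
  · rintro ⟨κ, hκprob, hfst, hsnd, hle⟩
    set Sμ : Set Config := {μAt 1, μAt 2, μAt 3} with hSμ
    set A : Set Config := {ρAt 0, ρAt 1, ρAt 2, ρAt 3} with hA
    set Sρ : Set Config := {ρAt 0, ρAt 1} with hSρ
    have h1 : κ (Prod.fst ⁻¹' Sμ) = 4⁻¹ * 3 := by
      rw [← Measure.map_apply measurable_fst (mset _), hfst, μcex_eq, apply4]
      rw [Set.indicator_of_notMem (by decide), Set.indicator_of_mem (by decide),
        Set.indicator_of_mem (by decide), Set.indicator_of_mem (by decide)]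
      norm_num
    have h2 : κ (Prod.snd ⁻¹' Aᶜ) = 0 := by
      rw [← Measure.map_apply measurable_snd (mset _), hsnd, ρcex_eq, apply4]
      rw [Set.indicator_of_notMem (by simp [hA]), Set.indicator_of_notMem (by simp [hA]),
        Set.indicator_of_notMem (by simp [hA]), Set.indicator_of_notMem (by simp [hA])]
      norm_num
    have h3 : κ (Prod.snd ⁻¹' Sρ) = 4⁻¹ * 2 := by
      rw [← Measure.map_apply measurable_snd (mset _), hsnd, ρcex_eq, apply4]
      rw [Set.indicator_of_mem (by simp [hSρ]), Set.indicator_of_mem (by simp [hSρ]),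
        Set.indicator_of_notMem (by simp [hSρ]; decide),
        Set.indicator_of_notMem (by simp [hSρ]; decide)]
      norm_num
    have h4 : κ {q : Config × Config | q.1 ≤ q.2}ᶜ = 0 := by
      rw [measure_compl (mset _) (measure_ne_top _ _), hle, measure_univ, tsub_self]
    have hsub : Prod.fst ⁻¹' Sμ ⊆
        {q : Config × Config | q.1 ≤ q.2}ᶜ ∪ (Prod.snd ⁻¹' Aᶜ ∪ Prod.snd ⁻¹' Sρ) := by
      rintro ⟨x, y⟩ hx
      by_cases hxy : x ≤ y
      · by_cases hyA : y ∈ A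
        · right; right
          simp only [hA, Set.mem_insert_iff, Set.mem_singleton_iff] at hyA
          simp only [hSμ, Set.mem_preimage, Set.mem_insert_iff, Set.mem_singleton_iff] at hx
          have : ∃ i : Fin 4, i ≠ 0 ∧ x = μAt i := by
            rcases hx with h | h | h
            exacts [⟨1, by decide, h⟩, ⟨2, by decide, h⟩, ⟨3, by decide, h⟩]
          obtain ⟨i, hi0, hxi⟩ := this
          have : ∃ j : Fin 4, y = ρAt j := by
            rcases hyA with h | h | h | h
            exacts [⟨0, h⟩, ⟨1, h⟩, ⟨2, h⟩, ⟨3, h⟩]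
          obtain ⟨j, hyj⟩ := this
          have hj := key3 i hi0 j (by rw [← hxi, ← hyj]; exact fun a => hxy a)
          simp only [hSρ, Set.mem_preimage, Set.mem_insert_iff, Set.mem_singleton_iff]
          rcases hj with h | h
          · left; rw [hyj, h]
          · right; rw [hyj, h]
        · right; left; exact hyA
      · left; exact hxy
    have hfinal : (4 : ENNReal)⁻¹ * 3 ≤ 4⁻¹ * 2 := by
      calc (4 : ENNReal)⁻¹ * 3 = κ (Prod.fst ⁻¹' Sμ) := h1.symm
        _ ≤ κ ({q : Config × Config | q.1 ≤ q.2}ᶜ ∪ (Prod.snd ⁻¹' Aᶜ ∪ Prod.snd ⁻¹' Sρ)) :=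
            measure_mono hsub
        _ ≤ κ {q : Config × Config | q.1 ≤ q.2}ᶜ + (κ (Prod.snd ⁻¹' Aᶜ) + κ (Prod.snd ⁻¹' Sρ)) :=
            le_trans (measure_union_le _ _) (by gcongr; exact measure_union_le _ _)
        _ = 4⁻¹ * 2 := by rw [h2, h3, h4]; simp
    rw [ENNReal.mul_le_mul_iff_right (by norm_num) (by norm_num)] at hfinal
    exact absurd hfinal (by norm_num)
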